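/- Let A ∈ ℝ^{2n×2n} be symmetric positive definite, partitioned into n×n blocks as A = [[A₁₁, A₁₂],[A₁₂ᵀ, A₂₂]], let A₁₁ = L₁₁L₁₁ᵀ be the Cholesky factorization, and set L₁ := [[L₁₁, 0],[(L₁₁⁻¹A₁₂)ᵀ, (L₁₁ᵀ)⁻¹]]. Then ‖Ω(L₁)‖₂ ≤ ‖A₁₁⁻¹‖₂ · ‖Ω(A)‖₂. -/

import Mathlib

open Matrix

/-- Spectral norm (ℓ² operator norm) of a real square matrix. -/
noncomputable def specNorm {m : Type*} [Fintype m] [DecidableEq m] (M : Matrix m m ℝ) : ℝ :=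
  ‖LinearMap.toContinuousLinearMap (Matrix.toEuclideanLin M)‖

/-- Frobenius norm of a real square matrix. -/
noncomputable def frobNorm {m : Type*} [Fintype m] (M : Matrix m m ℝ) : ℝ :=
  Real.sqrt (∑ i, ∑ j, (M i j) ^ 2)

/-- Spectral condition number κ₂(M) = ‖M⁻¹‖₂ ‖M‖₂. -/
noncomputable def cond2 {m : Type*} [Fintype m] [DecidableEq m] (M : Matrix m m ℝ) : ℝ :=
  specNorm M⁻¹ * specNorm M

/-- Spectral radius of a real square matrix (via its complex spectrum). -/
noncomputable def specRad {m : Type*} [Fintype m] [DecidableEq m] (M : Matrix m m ℝ) : ℝ :=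
  (spectralRadius ℂ (M.map (Complex.ofReal ·))).toReal

/-- Lower triangular predicate. -/
def LowerTri {k : ℕ} (M : Matrix (Fin k) (Fin k) ℝ) : Prop := ∀ i j, i < j → M i j = 0
/-- Upper triangular predicate. -/
def UpperTri {k : ℕ} (M : Matrix (Fin k) (Fin k) ℝ) : Prop := ∀ i j, j < i → M i j = 0
/-- Positive diagonal entries predicate. -/
def PosDiag {k : ℕ} (M : Matrix (Fin k) (Fin k) ℝ) : Prop := ∀ i, 0 < M i i

/-- The standard symplectic matrix J = [[0, I], [-I, 0]]. -/
noncomputable def Jmat (n : ℕ) : Matrix (Fin n ⊕ Fin n) (Fin n ⊕ Fin n) ℝ :=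
  fromBlocks 0 1 (-1) 0

/-- M is symplectic iff MᵀJM = J. -/
def IsSymplectic {n : ℕ} (M : Matrix (Fin n ⊕ Fin n) (Fin n ⊕ Fin n) ℝ) : Prop :=
  Mᵀ * Jmat n * M = Jmat n

/-- Ω(M) = MᵀJM − J, the loss of symplecticity. -/
noncomputable def Omega {n : ℕ} (M : Matrix (Fin n ⊕ Fin n) (Fin n ⊕ Fin n) ℝ) :
    Matrix (Fin n ⊕ Fin n) (Fin n ⊕ Fin n) ℝ :=
  Mᵀ * Jmat n * M - Jmat n


open scoped Matrix.Norms.L2Operator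

private lemma specNorm_eq' {m : Type*} [Fintype m] [DecidableEq m] (M : Matrix m m ℝ) :
    specNorm M = ‖M‖ := rfl

private lemma real_conjT' {m k : Type*} [Fintype m] [Fintype k] (M : Matrix m k ℝ) : Mᴴ = Mᵀ :=
  Matrix.conjTranspose_eq_transpose_of_trivial M

private lemma norm_one_le' (k : Type*) [Fintype k] [DecidableEq k] :
    ‖(1 : Matrix k k ℝ)‖ ≤ 1 := by
  rw [Matrix.cstar_norm_def, _root_.map_one]
  exact ContinuousLinearMap.norm_id_le

private lemma norm_fromBlocks_le' {k : Type*} [Fintype k] [DecidableEq k] (X : Matrix k k ℝ) :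
    ‖fromBlocks X (0 : Matrix k k ℝ) (0 : Matrix k k ℝ) (0 : Matrix k k ℝ)‖ ≤ ‖X‖ := by
  set E : Matrix (k ⊕ k) k ℝ := fromRows 1 0 with hE
  have hEt : Eᵀ = fromCols 1 0 := by
    simp [hE, transpose_fromRows]
  have hfac : fromBlocks X 0 0 0 = E * X * Eᵀ := by
    rw [hEt, hE, fromRows_mul, fromRows_mul_fromCols]
    simp
  have hEE : Eᴴ * E = 1 := by
    rw [real_conjT', hEt, hE, fromCols_mul_fromRows]
    simp
  have hnE : ‖E‖ ≤ 1 := by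
    have h2 : ‖E‖ * ‖E‖ = ‖Eᴴ * E‖ := (Matrix.l2_opNorm_conjTranspose_mul_self E).symm
    rw [hEE] at h2
    nlinarith [norm_one_le' k, norm_nonneg E]
  have hnEt : ‖Eᵀ‖ ≤ 1 := by
    rw [← real_conjT', Matrix.l2_opNorm_conjTranspose]; exact hnE
  calc ‖fromBlocks X 0 0 0‖ = ‖E * X * Eᵀ‖ := by rw [hfac]
    _ ≤ ‖E * X‖ * ‖Eᵀ‖ := Matrix.l2_opNorm_mul _ _
    _ ≤ (‖E‖ * ‖X‖) * ‖Eᵀ‖ := by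
        have := Matrix.l2_opNorm_mul E X
        nlinarith [norm_nonneg (E*X), norm_nonneg Eᵀ, norm_nonneg E, norm_nonneg X]
    _ ≤ ‖X‖ := by
        nlinarith [norm_nonneg E, norm_nonneg X, norm_nonneg Eᵀ,
          mul_nonneg (norm_nonneg E) (norm_nonneg X)]

private lemma omega_factor' {n : ℕ} (A11 A12 A22 L11 : Matrix (Fin n) (Fin n) ℝ)
    (A : Matrix (Fin n ⊕ Fin n) (Fin n ⊕ Fin n) ℝ)
    (hA : A = fromBlocks A11 A12 A12ᵀ A22)
    (h1 : L11⁻¹ * L11 = 1) (h2 : L11 * L11⁻¹ = 1)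
    (hchol : A11 = L11 * L11ᵀ) :
    Omega (fromBlocks L11 0 (L11⁻¹ * A12)ᵀ L11ᵀ⁻¹) =
      fromBlocks L11⁻¹ 0 0 0 * Omega A * (fromBlocks L11⁻¹ 0 0 0)ᵀ := by
  have h3 : L11ᵀ * L11ᵀ⁻¹ = 1 := by
    rw [← Matrix.transpose_nonsing_inv, ← Matrix.transpose_mul, h1, Matrix.transpose_one]
  simp only [Omega, Jmat, hA, fromBlocks_transpose, fromBlocks_multiply, Matrix.transpose_zero,
    Matrix.mul_zero, Matrix.zero_mul, Matrix.mul_one, Matrix.one_mul, add_zero, zero_add,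
    Matrix.mul_neg, Matrix.neg_mul, Matrix.transpose_neg, Matrix.transpose_one,
    Matrix.transpose_transpose, neg_zero, sub_eq_add_neg, Matrix.fromBlocks_neg,
    Matrix.fromBlocks_add, Matrix.fromBlocks_inj]
  have e1 : ∀ X : Matrix (Fin n) (Fin n) ℝ, L11⁻¹ * (L11 * X) = X := fun X => by
    rw [← Matrix.mul_assoc, h1, Matrix.one_mul]
  refine ⟨?_, ?_, ?_, trivial⟩
  · simp [hchol, Matrix.transpose_mul, Matrix.transpose_nonsing_inv, Matrix.mul_assoc,
      Matrix.mul_add, Matrix.add_mul, h3, e1, add_comm]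
  · simp [h3]
  · rw [← Matrix.transpose_nonsing_inv, Matrix.transpose_transpose, h1]
    simp

/-- ‖Ω(L₁)‖₂ ≤ ‖A₁₁⁻¹‖₂ ‖Ω(A)‖₂ for L₁ = [[L₁₁,0],[(L₁₁⁻¹A₁₂)ᵀ,(L₁₁ᵀ)⁻¹]],
where A₁₁ = L₁₁L₁₁ᵀ is the Cholesky factorization. -/
theorem stmt15 {n : ℕ} (hn : 1 ≤ n)
    (A11 A12 A22 L11 : Matrix (Fin n) (Fin n) ℝ)
    (A : Matrix (Fin n ⊕ Fin n) (Fin n ⊕ Fin n) ℝ)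
    (hA : A = fromBlocks A11 A12 A12ᵀ A22)
    (hpd : A.PosDef)
    (hlow : LowerTri L11) (hdiag : PosDiag L11) (hchol : A11 = L11 * L11ᵀ) :
    specNorm (Omega (fromBlocks L11 0 (L11⁻¹ * A12)ᵀ L11ᵀ⁻¹)) ≤
      specNorm A11⁻¹ * specNorm (Omega A) := by
  classical
  -- L11 is invertible
  have hdet : L11.det = ∏ i, L11 i i :=
    Matrix.det_of_lowerTriangular L11 (fun i j hij => hlow i j (by simpa using hij))
  have hdpos : 0 < L11.det := by
    rw [hdet]; exact Finset.prod_pos (fun i _ => hdiag i)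
  have hU : IsUnit L11.det := isUnit_iff_ne_zero.mpr (ne_of_gt hdpos)
  have h1 : L11⁻¹ * L11 = 1 := Matrix.nonsing_inv_mul _ hU
  have h2 : L11 * L11⁻¹ = 1 := Matrix.mul_nonsing_inv _ hU
  have key := omega_factor' A11 A12 A22 L11 A hA h1 h2 hchol
  set M1 : Matrix (Fin n ⊕ Fin n) (Fin n ⊕ Fin n) ℝ := fromBlocks L11⁻¹ 0 0 0 with hM1def
  set B := Omega A
  rw [specNorm_eq', specNorm_eq', specNorm_eq', key]
  have hM1 : ‖M1‖ ≤ ‖L11⁻¹‖ := norm_fromBlocks_le' _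
  have hM1t : ‖M1ᵀ‖ = ‖M1‖ := by rw [← real_conjT', Matrix.l2_opNorm_conjTranspose]
  have hA11inv : A11⁻¹ = L11ᵀ⁻¹ * L11⁻¹ := by rw [hchol, Matrix.mul_inv_rev]
  have hsq : ‖L11⁻¹‖ * ‖L11⁻¹‖ = ‖A11⁻¹‖ := by
    rw [← Matrix.l2_opNorm_conjTranspose_mul_self L11⁻¹, real_conjT',
      Matrix.transpose_nonsing_inv, ← hA11inv]
  have n1 : ‖M1 * B * M1ᵀ‖ ≤ ‖M1 * B‖ * ‖M1ᵀ‖ := Matrix.l2_opNorm_mul _ _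
  have n2 : ‖M1 * B‖ ≤ ‖M1‖ * ‖B‖ := Matrix.l2_opNorm_mul _ _
  have hMM : ‖M1‖ * ‖M1‖ ≤ ‖L11⁻¹‖ * ‖L11⁻¹‖ :=
    mul_le_mul hM1 hM1 (norm_nonneg _) ((norm_nonneg _).trans hM1)
  nlinarith [norm_nonneg M1, norm_nonneg B, norm_nonneg (M1 * B), norm_nonneg M1ᵀ,
    mul_nonneg (norm_nonneg M1) (norm_nonneg B), norm_nonneg L11⁻¹]
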